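/- Let A be an n × n matrix with a simple eigenvalue λ with eigenvector x, and S ⊆ {1,...,n}. Then the stacked matrix col{A − λI, I^{[n]\S}} has column rank n − 1 (rank deficient) if and only if S contains the support of x, i.e., x_j = 0 for all j ∉ S. -/
import Mathlib


/-- For a simple eigenvalue `λ` of `A` with eigenvector `x`, the stacked matrix
`col{A - λI, I^{[n]\S}}` has rank `n - 1` (column rank deficient) iff `S` contains the
support of `x`, i.e. `x_j = 0` for all `j ∉ S`. -/
theorem simple_eigenvalue_rank_deficient_iff_support (n : ℕ)
    (A : Matrix (Fin n) (Fin n) ℝ) (lam : ℂ) (x : Fin n → ℂ)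
    (hx : x ≠ 0)
    (heig : (A.map (Complex.ofReal)).mulVec x = lam • x)
    (hsimple : ∀ v : Fin n → ℂ, (A.map (Complex.ofReal)).mulVec v = lam • v → ∃ c : ℂ, v = c • x)
    (S : Finset (Fin n)) :
    (Matrix.fromRows (A.map (Complex.ofReal) - lam • (1 : Matrix (Fin n) (Fin n) ℂ))
        (Matrix.of fun i j : Fin n => if j ∈ S then (0 : ℂ) else if i = j then 1 else 0)).rank
      = n - 1
    ↔ ∀ j : Fin n, j ∉ S → x j = 0 := by
  classical
  have hn : 0 < n := by
    rcases Nat.eq_zero_or_pos n with h | h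
    · subst h; exact absurd (Subsingleton.elim x 0) hx
    · exact h
  set D : Matrix (Fin n) (Fin n) ℂ :=
    Matrix.of fun i j : Fin n => if j ∈ S then (0 : ℂ) else if i = j then 1 else 0 with hDdef
  set M := Matrix.fromRows (A.map (Complex.ofReal) - lam • (1 : Matrix (Fin n) (Fin n) ℂ)) D
    with hMdef
  have hD : ∀ (v : Fin n → ℂ) (i : Fin n),
      D.mulVec v i = if i ∈ S then 0 else v i := by
    intro v i
    simp only [hDdef, Matrix.mulVec, dotProduct, Matrix.of_apply]
    rw [Finset.sum_eq_single i]
    · by_cases h : i ∈ S <;> simp [h]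
    · intro j _ hji
      split_ifs with h1 h2
      · ring
      · exact absurd h2.symm hji
      · ring
    · intro h; exact absurd (Finset.mem_univ i) h
  have hmem : ∀ v : Fin n → ℂ, v ∈ LinearMap.ker M.mulVecLin ↔
      ((A.map (Complex.ofReal)).mulVec v = lam • v ∧ ∀ j, j ∉ S → v j = 0) := by
    intro v
    rw [LinearMap.mem_ker, Matrix.mulVecLin_apply, hMdef, Matrix.fromRows_mulVec]
    constructor
    · intro h
      have h1 : (A.map (Complex.ofReal) - lam • 1).mulVec v = 0 := by
        funext i; exact congrFun h (Sum.inl i)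
      rw [Matrix.sub_mulVec, Matrix.smul_mulVec, Matrix.one_mulVec, sub_eq_zero] at h1
      refine ⟨h1, fun j hj => ?_⟩
      have h2 : D.mulVec v j = 0 := congrFun h (Sum.inr j)
      rw [hD v j, if_neg hj] at h2
      exact h2
    · rintro ⟨h1, h2⟩
      funext i
      cases i with
      | inl i =>
        simp only [Sum.elim_inl, Matrix.sub_mulVec, Matrix.smul_mulVec,
          Matrix.one_mulVec, h1, Pi.zero_apply, Pi.sub_apply, sub_self]
      | inr i =>
        simp only [Sum.elim_inr, Pi.zero_apply, hD v i]
        split_ifs with h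
        · rfl
        · exact h2 i h
  have hrn := LinearMap.finrank_range_add_finrank_ker M.mulVecLin
  have hdom : Module.finrank ℂ (Fin n → ℂ) = n := by simp
  rw [hdom] at hrn
  have hrank : M.rank = Module.finrank ℂ (LinearMap.range M.mulVecLin) := rfl
  by_cases hcond : ∀ j, j ∉ S → x j = 0
  · refine iff_of_true ?_ hcond
    have hKer : LinearMap.ker M.mulVecLin = Submodule.span ℂ {x} := by
      ext v
      rw [hmem, Submodule.mem_span_singleton]
      constructor
      · rintro ⟨h1, _⟩
        obtain ⟨c, hc⟩ := hsimple v h1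
        exact ⟨c, hc.symm⟩
      · rintro ⟨c, rfl⟩
        constructor
        · rw [Matrix.mulVec_smul, heig, smul_comm]
        · intro j hj; simp [hcond j hj]
    have hker1 : Module.finrank ℂ (LinearMap.ker M.mulVecLin) = 1 := by
      rw [hKer]; exact finrank_span_singleton hx
    rw [hker1] at hrn
    rw [hrank]
    omega
  · refine iff_of_false ?_ hcond
    push_neg at hcond
    obtain ⟨j, hjS, hxj⟩ := hcond
    have hKer : LinearMap.ker M.mulVecLin = ⊥ := by
      rw [Submodule.eq_bot_iff]
      intro v hv
      rw [hmem] at hv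
      obtain ⟨c, hc⟩ := hsimple v hv.1
      have : c * x j = 0 := by
        have := hv.2 j hjS
        rw [hc] at this
        simpa using this
      rcases mul_eq_zero.mp this with h | h
      · rw [hc, h, zero_smul]
      · exact absurd h hxj
    have hker0 : Module.finrank ℂ (LinearMap.ker M.mulVecLin) = 0 := by
      rw [hKer]; simp
    rw [hker0] at hrn
    rw [hrank]
    omega
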